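/- Let X be a set and let G be a subgroup of Equiv.Perm X such that every element of G has only finite orbits. Then every element of the subgroup of Equiv.Perm X generated by G together with FAlt(X) also has only finite orbits. -/

import Mathlib

lemma zpow_succ_apply' {X : Type*} (h : Equiv.Perm X) (d : ℤ) (x : X) :
    (h ^ (d + 1)) x = h ((h ^ d) x) := by
  rw [show d + 1 = 1 + d from add_comm d 1, zpow_add, zpow_one, Equiv.Perm.mul_apply]

lemma zpow_pred_apply' {X : Type*} (h : Equiv.Perm X) (d : ℤ) (x : X) :
    (h ^ (d - 1)) x = h⁻¹ ((h ^ d) x) := by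
  rw [show d - 1 = -1 + d by ring, zpow_add, zpow_neg_one, Equiv.Perm.mul_apply]

/-- The subgroup of finitely supported permutations. -/
def finSupp (X : Type*) : Subgroup (Equiv.Perm X) where
  carrier := {σ | {x | σ x ≠ x}.Finite}
  one_mem' := by simp
  mul_mem' := by
    intro a b ha hb
    refine Set.Finite.subset (ha.union hb) ?_
    intro x hx
    by_contra h
    simp only [Set.mem_union, Set.mem_setOf_eq, not_or, not_not] at h
    exact hx (by simp [Equiv.Perm.mul_apply, h.2, h.1])
  inv_mem' := by
    intro a ha
    refine Set.Finite.subset ha ?_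
    intro x hx
    simp only [Set.mem_setOf_eq] at hx ⊢
    intro h
    exact hx (a.injective (by simp [h]))

instance finSupp_normal (X : Type*) : (finSupp X).Normal := by
  constructor
  intro σ hσ τ
  have h : {x | (τ * σ * τ⁻¹) x ≠ x} = (τ⁻¹ : Equiv.Perm X) ⁻¹' {x | σ x ≠ x} := by
    ext x
    simp only [Set.mem_setOf_eq, Set.mem_preimage, Equiv.Perm.mul_apply]
    constructor
    · intro h h'; exact h (by rw [h']; simp)
    · intro h h'; exact h (by apply τ.injective; simpa using h')
  show {x | (τ * σ * τ⁻¹) x ≠ x}.Finite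
  rw [h]
  exact Set.Finite.preimage (Equiv.injective _).injOn hσ

lemma finite_orbits_mul {X : Type*} (g f : Equiv.Perm X)
    (hg : ∀ x : X, (Set.range fun d : ℤ => (g ^ d) x).Finite)
    (hf : {x | f x ≠ x}.Finite) (x : X) :
    (Set.range fun d : ℤ => ((g * f) ^ d) x).Finite := by
  set S := {x | f x ≠ x} with hS
  set T := ⋃ s ∈ S, Set.range (fun d : ℤ => (g ^ d) s) with hT
  have hTfin : T.Finite := Set.Finite.biUnion hf (fun s _ => hg s)
  have hgT : ∀ y, y ∈ T ↔ g y ∈ T := by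
    intro y
    simp only [hT, Set.mem_iUnion, Set.mem_range]
    constructor
    · rintro ⟨s, hs, d, rfl⟩
      exact ⟨s, hs, d + 1, by rw [zpow_succ_apply']⟩
    · rintro ⟨s, hs, d, hd⟩
      refine ⟨s, hs, d - 1, ?_⟩
      rw [zpow_pred_apply', hd]
      simp
  have hST : S ⊆ T := by
    intro s hs
    simp only [hT, Set.mem_iUnion, Set.mem_range]
    exact ⟨s, hs, 0, by simp⟩
  have hfT : ∀ y, f y ∈ T ∨ f y = y := fun y => by
    by_cases h : f y = y
    · exact Or.inr h
    · exact Or.inl (hST (show f (f y) ≠ f y from fun h' => h (f.injective h')))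
  have hfiT : ∀ y, f⁻¹ y ∈ T ∨ f⁻¹ y = y := fun y => by
    by_cases h : f⁻¹ y = y
    · exact Or.inr h
    · refine Or.inl (hST ?_)
      show f (f⁻¹ y) ≠ f⁻¹ y
      simpa using fun h' => h h'.symm
  by_cases hx : x ∈ T
  · -- the orbit stays inside the finite set T
    refine Set.Finite.subset hTfin ?_
    rintro _ ⟨d, rfl⟩
    induction d using Int.induction_on with
    | zero => simpa using hx
    | succ d ih =>
      show ((g * f) ^ ((d : ℤ) + 1)) x ∈ T
      rw [zpow_succ_apply', Equiv.Perm.mul_apply]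
      rcases hfT (((g * f) ^ (d : ℤ)) x) with h | h
      · exact (hgT _).mp h
      · rw [h]; exact (hgT _).mp ih
    | pred d ih =>
      show ((g * f) ^ (-(d : ℤ) - 1)) x ∈ T
      rw [zpow_pred_apply', mul_inv_rev, Equiv.Perm.mul_apply]
      have h1 : g⁻¹ (((g * f) ^ (-(d : ℤ))) x) ∈ T := by
        have h2 := (hgT (g⁻¹ (((g * f) ^ (-(d : ℤ))) x))).mpr
        rw [← Equiv.Perm.mul_apply g g⁻¹, mul_inv_cancel, Equiv.Perm.one_apply] at h2
        exact h2 ih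
      rcases hfiT (g⁻¹ (((g * f) ^ (-(d : ℤ))) x)) with h | h
      · exact h
      · rw [h]; exact h1
  · -- the orbit coincides with the g-orbit
    have key : ∀ d : ℤ, ((g * f) ^ d) x = (g ^ d) x ∧ (g ^ d) x ∉ T := by
      intro d
      induction d using Int.induction_on with
      | zero => simpa using hx
      | succ d ih =>
        obtain ⟨ih1, ih2⟩ := ih
        have hfx : f ((g ^ (d : ℤ)) x) = (g ^ (d : ℤ)) x := by
          by_contra h
          exact ih2 (hST h)
        constructor
        · rw [zpow_succ_apply', zpow_succ_apply', ih1, Equiv.Perm.mul_apply, hfx]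
        · rw [zpow_succ_apply']
          exact fun h => ih2 ((hgT _).mpr h)
      | pred d ih =>
        obtain ⟨ih1, ih2⟩ := ih
        have hnot : (g ^ (-(d : ℤ) - 1)) x ∉ T := by
          rw [zpow_pred_apply']
          intro h
          exact ih2 (by simpa using (hgT _).mp h)
        have hz : f ((g ^ (-(d : ℤ) - 1)) x) = (g ^ (-(d : ℤ) - 1)) x := by
          by_contra h
          exact hnot (hST h)
        have hfix : f⁻¹ ((g ^ (-(d : ℤ) - 1)) x) = (g ^ (-(d : ℤ) - 1)) x := by
          conv_lhs => rw [← hz]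
          simp
        refine ⟨?_, hnot⟩
        rw [zpow_pred_apply', ih1, mul_inv_rev, Equiv.Perm.mul_apply, ← zpow_pred_apply', hfix]
    refine Set.Finite.subset (hg x) ?_
    rintro _ ⟨d, rfl⟩
    exact ⟨d, ((key d).1).symm⟩

lemma fAlt_le_finSupp (X : Type*) :
    Subgroup.closure {σ : Equiv.Perm X | {x | σ x ≠ x}.ncard = 3} ≤ finSupp X := by
  rw [Subgroup.closure_le]
  intro σ hσ
  show {x | σ x ≠ x}.Finite
  by_contra h
  simp only [Set.mem_setOf_eq] at hσ
  rw [Set.Infinite.ncard h] at hσ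
  simp at hσ

/-- `FAlt X`: the subgroup of `Equiv.Perm X` generated by all 3-cycles, i.e. by those
permutations whose support has exactly 3 elements. -/
def FAlt (X : Type*) : Subgroup (Equiv.Perm X) :=
  Subgroup.closure {σ : Equiv.Perm X | {x | σ x ≠ x}.ncard = 3}

/-- If every element of `G ≤ Sym X` has only finite orbits, then every element of
`⟨G, FAlt X⟩` has only finite orbits. -/
theorem finite_orbits_sup_fAlt {X : Type*} (G : Subgroup (Equiv.Perm X))
    (horb : ∀ g ∈ G, ∀ x : X, (Set.range fun d : ℤ => (g ^ d) x).Finite) :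
    ∀ g ∈ G ⊔ FAlt X, ∀ x : X, (Set.range fun d : ℤ => (g ^ d) x).Finite := by
  intro g hg x
  have hle : G ⊔ FAlt X ≤ G ⊔ finSupp X := sup_le_sup_left (fAlt_le_finSupp X) G
  have hmem : g ∈ (↑(G ⊔ finSupp X) : Set (Equiv.Perm X)) := hle hg
  rw [Subgroup.mul_normal] at hmem
  obtain ⟨a, ha, b, hb, rfl⟩ := hmem
  exact finite_orbits_mul a b (horb a ha) hb x
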